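/- Let f(z) = z + a_n z^n + Σ_{k≥n+1} a_k z^k − conj(z) with Re(a_n) ≠ 0, where the power series converges in a neighborhood of 0. Then f and g(z) = z + a_n z^n − conj(z) have the same Poincaré index at the origin: ind(f; 0) = ind(g; 0). -/

import Mathlib

open Complex Set

/-- `WindingOn f z0 r m` : the winding of `f` along the positively oriented circle of
radius `r` centered at `z0` equals `m`, expressed via a continuous branch of the argument. -/
def WindingOn (f : ℂ → ℂ) (z0 : ℂ) (r : ℝ) (m : ℤ) : Prop :=
  ∃ θ : ℝ → ℝ, ContinuousOn θ (Set.Icc 0 (2 * Real.pi)) ∧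
    (∀ t ∈ Set.Icc 0 (2 * Real.pi),
      f (z0 + r * Complex.exp (Complex.I * t)) =
        (‖f (z0 + r * Complex.exp (Complex.I * t))‖ : ℂ) *
          Complex.exp (Complex.I * (θ t : ℝ))) ∧
    θ (2 * Real.pi) - θ 0 = 2 * Real.pi * m

/-- The Poincaré index of `f` at `z0` is `m`: the winding along all sufficiently
small circles around `z0` equals `m`. -/
def HasIndex (f : ℂ → ℂ) (z0 : ℂ) (m : ℤ) : Prop :=
  ∃ r0 > 0, ∀ r : ℝ, 0 < r → r < r0 → WindingOn f z0 r m

lemma circle_abs (r t : ℝ) (hr : 0 ≤ r) :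
    ‖(0:ℂ) + r * Complex.exp (Complex.I * t)‖ = r := by
  rw [zero_add, norm_mul, Complex.norm_real, Real.norm_eq_abs, Complex.norm_exp, _root_.abs_of_nonneg hr]
  simp [Complex.mul_re]

lemma circle_cont (r : ℝ) : Continuous fun t : ℝ => (0:ℂ) + r * Complex.exp (Complex.I * t) :=
  continuous_const.add (continuous_const.mul
    (Complex.continuous_exp.comp (continuous_const.mul Complex.continuous_ofReal)))

lemma winding_congr (F G : ℂ → ℂ) (r : ℝ) (m : ℤ)
    (hFc : ContinuousOn (fun t : ℝ => F ((0:ℂ) + r * Complex.exp (Complex.I * t))) (Icc 0 (2 * Real.pi)))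
    (hGc : ContinuousOn (fun t : ℝ => G ((0:ℂ) + r * Complex.exp (Complex.I * t))) (Icc 0 (2 * Real.pi)))
    (hclose : ∀ t ∈ Icc (0:ℝ) (2 * Real.pi),
      ‖F ((0:ℂ) + r * Complex.exp (Complex.I * t)) - G ((0:ℂ) + r * Complex.exp (Complex.I * t))‖
        < ‖G ((0:ℂ) + r * Complex.exp (Complex.I * t))‖)
    (hG : WindingOn G 0 r m) : WindingOn F 0 r m := by
  obtain ⟨θ, hθc, hθeq, hθd⟩ := hG
  set γ : ℝ → ℂ := fun t => (0:ℂ) + r * Complex.exp (Complex.I * t) with hγdef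
  set q : ℝ → ℂ := fun t => F (γ t) / G (γ t) with hqdef
  have hGne : ∀ t ∈ Icc (0:ℝ) (2 * Real.pi), G (γ t) ≠ 0 := by
    intro t ht h
    have := hclose t ht
    rw [h] at this
    simp only [sub_zero, norm_zero] at this
    exact (norm_nonneg _).not_gt this
  have hq1 : ∀ t ∈ Icc (0:ℝ) (2 * Real.pi), ‖q t - 1‖ < 1 := by
    intro t ht
    have hne := hGne t ht
    have : q t - 1 = (F (γ t) - G (γ t)) / G (γ t) := by
      simp only [hqdef]; rw [sub_div, div_self hne]
    rw [this, norm_div, div_lt_one (norm_pos_iff.mpr hne)]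
    exact hclose t ht
  have hqre : ∀ t ∈ Icc (0:ℝ) (2 * Real.pi), 0 < (q t).re := by
    intro t ht
    have h1 := hq1 t ht
    have h2 : |(q t - 1).re| ≤ ‖q t - 1‖ := Complex.abs_re_le_norm _
    have h3 : (q t - 1).re = (q t).re - 1 := by simp
    rw [h3] at h2
    have := abs_lt.mp (lt_of_le_of_lt h2 h1)
    linarith [this.1]
  have hqc : ContinuousOn q (Icc 0 (2 * Real.pi)) := hFc.div hGc hGne
  have hφc : ContinuousOn (fun t => (q t).arg) (Icc 0 (2 * Real.pi)) := by
    intro t ht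
    exact (Complex.continuousAt_arg (Complex.mem_slitPlane_iff.mpr (Or.inl (hqre t ht)))).comp_continuousWithinAt (hqc t ht)
  refine ⟨fun t => θ t + (q t).arg, hθc.add hφc, ?_, ?_⟩
  · intro t ht
    have hne := hGne t ht
    have hF : F (γ t) = q t * G (γ t) := (div_mul_cancel₀ _ hne).symm
    calc F (γ t) = q t * G (γ t) := hF
      _ = ((‖q t‖ : ℂ) * Complex.exp ((q t).arg * Complex.I)) *
            ((‖G (γ t)‖ : ℂ) * Complex.exp (Complex.I * (θ t : ℝ))) := by
          rw [Complex.norm_mul_exp_arg_mul_I, ← hθeq t ht]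
      _ = (‖F (γ t)‖ : ℂ) * Complex.exp (Complex.I * ((θ t + (q t).arg : ℝ) : ℂ)) := by
          rw [hF, norm_mul]
          rw [show (Complex.I * ((θ t + (q t).arg : ℝ) : ℂ)) = ((q t).arg : ℂ) * Complex.I + Complex.I * (θ t : ℝ) by push_cast; ring, Complex.exp_add]
          push_cast
          ring
  · have hγeq : γ (2 * Real.pi) = γ 0 := by
      have h1 : Complex.exp (Complex.I * (2 * (Real.pi : ℂ))) = 1 := by
        rw [show Complex.I * (2 * (Real.pi : ℂ)) = 2 * Real.pi * Complex.I by ring]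
        exact Complex.exp_two_pi_mul_I
      simp [hγdef, h1]
    have hqq : q (2 * Real.pi) = q 0 := by rw [hqdef]; simp only; rw [hγeq]
    show θ (2 * Real.pi) + (q (2 * Real.pi)).arg - (θ 0 + (q 0).arg) = 2 * Real.pi * m
    rw [hqq]
    linarith [hθd]

lemma g_lower (an : ℂ) (hre : an.re ≠ 0) (n : ℕ) (hn2 : 2 ≤ n) :
    ∃ r1 > 0, ∀ r : ℝ, 0 < r → r ≤ r1 → ∀ z : ℂ, ‖z‖ = r →
      (|an.re| / 2) * r ^ n ≤ ‖z + an * z ^ n - (starRingEnd ℂ) z‖ := by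
  set ε := |an.re| with hεdef
  set A := ‖an‖ with hAdef
  have hε : 0 < ε := abs_pos.mpr hre
  have hεA : ε ≤ A := Complex.abs_re_le_norm an
  have hA : 0 < A := lt_of_lt_of_le hε hεA
  have hden : (0:ℝ) < 4 * n * A ^ 2 + 1 := by positivity
  refine ⟨min 1 (min (1 / (4 * n * A ^ 2 + 1)) (ε / (4 * n * A ^ 2 + 1))), by positivity, ?_⟩
  intro r hr hrle z habs
  have hr1 : r ≤ 1 := le_trans hrle (min_le_left _ _)
  have hc1 : n * A ^ 2 * r ≤ 1 / 4 := by
    have h := le_trans hrle (le_trans (min_le_right _ _) (min_le_left _ _))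
    rw [le_div_iff₀ hden] at h
    linarith [hr.le]
  have hc2 : n * A ^ 2 * r ≤ ε / 4 := by
    have h := le_trans hrle (le_trans (min_le_right _ _) (min_le_right _ _))
    rw [le_div_iff₀ hden] at h
    linarith [hr.le]
  set x := z.re with hxdef
  set y := z.im with hydef
  have hxy : x ^ 2 + y ^ 2 = r ^ 2 := by
    rw [← habs, Complex.sq_norm, Complex.normSq_apply]; ring
  have hrn : (0:ℝ) < r ^ n := pow_pos hr n
  have hrn1 : (0:ℝ) < r ^ (n-1) := pow_pos hr _
  have hgz : z + an * z ^ n - (starRingEnd ℂ) z = ((2 * y : ℝ) : ℂ) * Complex.I + an * z ^ n := by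
    have h := Complex.sub_conj z
    rw [← hydef] at h
    linear_combination h
  have himg : (z + an * z ^ n - (starRingEnd ℂ) z).im = 2 * y + (an * z ^ n).im := by
    rw [hgz]; simp
  have hreg : (z + an * z ^ n - (starRingEnd ℂ) z).re = (an * z ^ n).re := by
    rw [hgz]; simp
  have habsw : ‖an * z ^ n‖ = A * r ^ n := by
    rw [norm_mul, norm_pow, habs]
  rcases le_or_gt (A * r ^ n) |y| with hcase | hcase
  · -- |y| large : imaginary part dominates
    have h5 := Complex.abs_im_le_norm (z + an * z ^ n - (starRingEnd ℂ) z)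
    rw [himg] at h5
    have h6 : |(an * z ^ n).im| ≤ A * r ^ n := habsw ▸ Complex.abs_im_le_norm _
    have h4 : |2 * y| - |(an * z ^ n).im| ≤ |2 * y + (an * z ^ n).im| := by
      have h := abs_add_le (2 * y + (an * z ^ n).im) (-(an * z ^ n).im)
      simp only [add_neg_cancel_right, abs_neg] at h
      linarith
    have h7 : 2 * |y| = |2 * y| := by rw [abs_mul]; norm_num
    have h8 : (ε/2) * r ^ n ≤ A * r ^ n :=
      mul_le_mul_of_nonneg_right (by linarith) hrn.le
    linarith [h5, h4, h6, hcase, h8]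
  · -- |y| small : real part dominates
    have hyA : |y| ≤ A * r ^ n := hcase.le
    have hxr : |x| ≤ r := by
      apply (pow_le_pow_iff_left₀ (abs_nonneg x) hr.le two_ne_zero).mp
      rw [_root_.sq_abs]
      linarith [sq_nonneg y, hxy]
    have hQP : r ^ (n-1) * r = r ^ n := by
      rw [← pow_succ]; congr 1; omega
    have hy2 : y ^ 2 ≤ A ^ 2 * (r ^ n) ^ 2 := by
      calc y ^ 2 = |y| * |y| := by rw [abs_mul_abs_self]; ring
        _ ≤ (A * r ^ n) * (A * r ^ n) := mul_self_le_mul_self (abs_nonneg y) hyA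
        _ = A ^ 2 * (r ^ n) ^ 2 := by ring
    -- lower bound on |x|^n
    set δ := A ^ 2 * r ^ (2 * n - 2) with hδdef
    have hP2 : (r ^ n) ^ 2 = r ^ (2 * n - 2) * r ^ 2 := by
      rw [← pow_mul, ← pow_add]; congr 1; omega
    have hδr : r ^ (2 * n - 2) ≤ r := by
      calc r ^ (2 * n - 2) ≤ r ^ 1 := pow_le_pow_of_le_one hr.le hr1 (by omega)
        _ = r := pow_one r
    have hnδ : (n:ℝ) * δ ≤ 1 / 4 := by
      calc (n:ℝ) * δ = n * A ^ 2 * r ^ (2 * n - 2) := by rw [hδdef]; ring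
        _ ≤ n * A ^ 2 * r := by
            apply mul_le_mul_of_nonneg_left hδr (by positivity)
        _ ≤ 1 / 4 := hc1
    have hδ0 : 0 ≤ δ := by positivity
    have hδ1 : δ ≤ 1 / 4 := by
      have hn1 : (1:ℝ) ≤ (n:ℝ) := by exact_mod_cast (by omega : 1 ≤ n)
      calc δ ≤ n * δ := le_mul_of_one_le_left hδ0 hn1
        _ ≤ 1/4 := hnδ
    have hP2' : A ^ 2 * (r ^ n) ^ 2 = δ * r ^ 2 := by rw [hδdef, hP2]; ring
    have h7 : r ^ 2 * (1 - δ) ≤ x ^ 2 := by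
      have e : r ^ 2 * (1 - δ) = r ^ 2 - δ * r ^ 2 := by ring
      rw [e]
      linarith [hy2, hP2', hxy]
    have h8 : (r ^ 2 * (1 - δ)) ^ n ≤ (x ^ 2) ^ n :=
      pow_le_pow_left₀ (mul_nonneg (sq_nonneg r) (by linarith)) h7 n
    have h9 : 1 - (n:ℝ) * δ ≤ (1 - δ) ^ n := by
      have h := one_add_mul_le_pow (a := -δ) (by linarith) n
      rw [mul_neg, ← sub_eq_add_neg, ← sub_eq_add_neg] at h
      exact h
    have h10 : (3/4 : ℝ) * (r ^ n) ^ 2 ≤ (x ^ 2) ^ n := by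
      have e1 : (r ^ 2 * (1 - δ)) ^ n = (r ^ n) ^ 2 * (1 - δ) ^ n := by
        rw [mul_pow, ← pow_mul, ← pow_mul, Nat.mul_comm]
      calc (3/4 : ℝ) * (r ^ n) ^ 2 = (r ^ n) ^ 2 * (3/4) := by ring
        _ ≤ (r ^ n) ^ 2 * (1 - (n:ℝ) * δ) := mul_le_mul_of_nonneg_left (by linarith) (sq_nonneg _)
        _ ≤ (r ^ n) ^ 2 * (1 - δ) ^ n := mul_le_mul_of_nonneg_left h9 (sq_nonneg _)
        _ = (r ^ 2 * (1 - δ)) ^ n := e1.symm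
        _ ≤ (x ^ 2) ^ n := h8
    have h11 : (3/4 : ℝ) * r ^ n ≤ |x| ^ n := by
      have e2 : (|x| ^ n) ^ 2 = (x ^ 2) ^ n := by
        rw [← pow_mul, ← pow_mul, Nat.mul_comm n 2, pow_mul, pow_mul, _root_.sq_abs]
      apply (pow_le_pow_iff_left₀ (by positivity) (pow_nonneg (abs_nonneg x) n) two_ne_zero).mp
      rw [e2]
      calc ((3/4 : ℝ) * r ^ n) ^ 2 = (9/16) * (r ^ n) ^ 2 := by ring
        _ ≤ (3/4 : ℝ) * (r ^ n) ^ 2 :=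
            mul_le_mul_of_nonneg_right (by norm_num : (9/16:ℝ) ≤ 3/4) (sq_nonneg (r ^ n))
        _ ≤ (x ^ 2) ^ n := h10
    -- bound |z^n - x^n|
    have hzx : ‖z ^ n - ((x:ℝ) : ℂ) ^ n‖ ≤ n * r ^ (n-1) * |y| := by
      have hid : z ^ n - ((x:ℝ) : ℂ) ^ n
          = (∑ i ∈ Finset.range n, z ^ i * ((x:ℝ) : ℂ) ^ (n - 1 - i)) * (z - (x:ℝ)) :=
        (geom_sum₂_mul z ((x:ℝ):ℂ) n).symm
      have hzsub : ‖z - (x:ℝ)‖ = |y| := by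
        have : z - ((x:ℝ):ℂ) = ((y:ℝ):ℂ) * Complex.I := by
          apply Complex.ext <;> simp [hxdef, hydef]
        rw [this, norm_mul, Complex.norm_I, Complex.norm_real, Real.norm_eq_abs, mul_one]
      rw [hid, norm_mul, hzsub]
      apply mul_le_mul_of_nonneg_right _ (abs_nonneg y)
      calc ‖∑ i ∈ Finset.range n, z ^ i * ((x:ℝ):ℂ) ^ (n - 1 - i)‖
          ≤ ∑ i ∈ Finset.range n, ‖z ^ i * ((x:ℝ):ℂ) ^ (n - 1 - i)‖ :=
            norm_sum_le _ _
        _ ≤ ∑ i ∈ Finset.range n, r ^ (n-1) := by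
            apply Finset.sum_le_sum
            intro i hi
            rw [norm_mul, norm_pow, norm_pow, habs, Complex.norm_real, Real.norm_eq_abs]
            calc r ^ i * |x| ^ (n - 1 - i) ≤ r ^ i * r ^ (n - 1 - i) := by
                  apply mul_le_mul_of_nonneg_left (pow_le_pow_left₀ (abs_nonneg x) hxr _) (by positivity)
              _ = r ^ (n-1) := by
                  rw [← pow_add]; congr 1
                  rw [Finset.mem_range] at hi; omega
        _ = n * r ^ (n-1) := by rw [Finset.sum_const, Finset.card_range]; simp
    -- real part estimates
    have hw1 : |(an * ((x:ℝ):ℂ) ^ n).re| = ε * |x| ^ n := by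
      have : (an * ((x:ℝ):ℂ) ^ n).re = an.re * x ^ n := by
        rw [← Complex.ofReal_pow, Complex.mul_re, Complex.ofReal_re, Complex.ofReal_im]
        ring
      rw [this, abs_mul, _root_.abs_pow]
    have hsplit : (an * z ^ n).re
        = (an * ((x:ℝ):ℂ) ^ n).re + (an * (z ^ n - ((x:ℝ):ℂ) ^ n)).re := by
      rw [← Complex.add_re]; ring_nf
    have h2nd : |(an * (z ^ n - ((x:ℝ):ℂ) ^ n)).re| ≤ A * (n * r ^ (n-1) * |y|) := by
      refine le_trans (Complex.abs_re_le_norm _) ?_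
      rw [norm_mul]
      exact mul_le_mul_of_nonneg_left hzx (norm_nonneg _)
    have hre_low : (ε/2) * r ^ n ≤ |(an * z ^ n).re| := by
      have t1 : |(an * ((x:ℝ):ℂ) ^ n).re| - |(an * (z ^ n - ((x:ℝ):ℂ) ^ n)).re|
          ≤ |(an * z ^ n).re| := by
        rw [hsplit]
        have h := abs_add_le ((an * ((x:ℝ):ℂ) ^ n).re + (an * (z ^ n - ((x:ℝ):ℂ) ^ n)).re)
          (-(an * (z ^ n - ((x:ℝ):ℂ) ^ n)).re)
        simp only [add_neg_cancel_right, abs_neg] at h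
        linarith
      have t2 : A * (n * r ^ (n-1) * |y|) ≤ (ε/4) * r ^ n := by
        have u1 : A * (n * r ^ (n-1) * |y|) ≤ A * (n * r ^ (n-1) * (A * r ^ n)) := by
          apply mul_le_mul_of_nonneg_left _ hA.le
          apply mul_le_mul_of_nonneg_left hyA (by positivity)
        have u2 : A * ((n:ℝ) * r ^ (n-1) * (A * r ^ n)) = (n * A ^ 2 * r ^ (n-1)) * r ^ n := by ring
        have u3 : (n:ℝ) * A ^ 2 * r ^ (n-1) ≤ n * A ^ 2 * r := by
          apply mul_le_mul_of_nonneg_left _ (by positivity)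
          calc r ^ (n-1) ≤ r ^ 1 := pow_le_pow_of_le_one hr.le hr1 (by omega)
            _ = r := pow_one r
        calc A * ((n:ℝ) * r ^ (n-1) * |y|) ≤ A * ((n:ℝ) * r ^ (n-1) * (A * r ^ n)) := u1
          _ = ((n:ℝ) * A ^ 2 * r ^ (n-1)) * r ^ n := u2
          _ ≤ (ε/4) * r ^ n := mul_le_mul_of_nonneg_right (le_trans u3 hc2) hrn.le
      have t3 : (3/4 : ℝ) * ε * r ^ n ≤ ε * |x| ^ n := by
        calc (3/4 : ℝ) * ε * r ^ n = ε * ((3/4) * r ^ n) := by ring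
          _ ≤ ε * |x| ^ n := mul_le_mul_of_nonneg_left h11 hε.le
      rw [hw1] at t1
      linarith
    have h5 := Complex.abs_re_le_norm (z + an * z ^ n - (starRingEnd ℂ) z)
    rw [hreg] at h5
    linarith

lemma tail_bound (a : ℕ → ℂ) (n : ℕ) (hn2 : 2 ≤ n) (ha0 : a 0 = 0) (ha1 : a 1 = 1)
    (hmin : ∀ m : ℕ, 2 ≤ m → m < n → a m = 0)
    (ρ M : ℝ) (hρ : 0 < ρ) (hM : ∀ k, ‖a k‖ * ρ ^ k ≤ M)
    (S : ℂ) (z : ℂ) (hz : ‖z‖ ≤ ρ / 2)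
    (h1 : HasSum (fun k : ℕ => a k * z ^ k) S) :
    ‖S - (z + a n * z ^ n)‖ ≤ (2 * M / ρ ^ (n+1)) * (‖z‖) ^ (n+1) := by
  have hM0 : 0 ≤ M := le_trans (by positivity) (hM 0)
  -- the truncated polynomial as a HasSum
  have hd : HasSum (fun k : ℕ => (if k ≤ n then a k else 0) * z ^ k) (z + a n * z ^ n) := by
    have h0 : ∀ k ∉ Finset.range (n+1), (if k ≤ n then a k else 0) * z ^ k = 0 := by
      intro k hk
      rw [Finset.mem_range, not_lt] at hk
      rw [if_neg (by omega), zero_mul]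
    have hs := hasSum_sum_of_ne_finset_zero (L := SummationFilter.unconditional ℕ) h0
    have hval : ∑ k ∈ Finset.range (n+1), (if k ≤ n then a k else 0) * z ^ k
        = z + a n * z ^ n := by
      have hcong : ∀ k ∈ Finset.range (n+1), (if k ≤ n then a k else 0) * z ^ k
          = (if k = 1 then z else 0) + (if k = n then a n * z ^ n else 0) := by
        intro k hk
        rw [Finset.mem_range] at hk
        rw [if_pos (by omega)]
        by_cases hk1 : k = 1
        · subst hk1
          rw [ha1, if_pos rfl, if_neg (by omega)]
          simp
        · by_cases hkn : k = n
          · subst hkn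
            rw [if_neg hk1, if_pos rfl]
            simp
          · have hak : a k = 0 := by
              rcases Nat.lt_or_ge k 2 with h2 | h2
              · have : k = 0 := by omega
                rw [this, ha0]
              · exact hmin k h2 (by omega)
            rw [hak, if_neg hk1, if_neg hkn]
            simp
      rw [Finset.sum_congr rfl hcong, Finset.sum_add_distrib,
        Finset.sum_ite_eq' (Finset.range (n+1)) 1 (fun _ => z),
        Finset.sum_ite_eq' (Finset.range (n+1)) n (fun _ => a n * z ^ n),
        if_pos (by rw [Finset.mem_range]; omega), if_pos (by rw [Finset.mem_range]; omega)]
    rwa [hval] at hs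
  have hc : HasSum (fun k : ℕ => (a k - if k ≤ n then a k else 0) * z ^ k)
      (S - (z + a n * z ^ n)) := by
    have := h1.sub hd
    simpa [sub_mul] using this
  have hz0 : ∑ i ∈ Finset.range (n+1), (a i - if i ≤ n then a i else 0) * z ^ i = 0 := by
    apply Finset.sum_eq_zero
    intro i hi
    rw [Finset.mem_range] at hi
    rw [if_pos (by omega), sub_self, zero_mul]
  have hshift := (hasSum_nat_add_iff' (n+1)).mpr hc
  rw [hz0, sub_zero] at hshift
  have hfe : (fun k : ℕ => (a (k + (n+1)) - if k + (n+1) ≤ n then a (k + (n+1)) else 0)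
      * z ^ (k + (n+1))) = fun k : ℕ => a (k + (n+1)) * z ^ (k + (n+1)) := by
    funext k
    rw [if_neg (by omega), sub_zero]
  rw [hfe] at hshift
  -- termwise bound
  set B : ℝ := M / ρ ^ (n+1) * (‖z‖) ^ (n+1) with hBdef
  have hB0 : 0 ≤ B := by positivity
  have hb : ∀ k : ℕ, ‖a (k + (n+1)) * z ^ (k + (n+1))‖ ≤ B * (1/2) ^ k := by
    intro k
    have hAj : ‖a (k + (n+1))‖ ≤ M / ρ ^ (k + (n+1)) := by
      rw [le_div_iff₀ (by positivity)]
      exact hM _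
    calc ‖a (k + (n+1)) * z ^ (k + (n+1))‖
        = ‖a (k + (n+1))‖ * (‖z‖) ^ (k + (n+1)) := by
          rw [norm_mul, norm_pow]
      _ ≤ (M / ρ ^ (k + (n+1))) * (‖z‖) ^ (k + (n+1)) :=
          mul_le_mul_of_nonneg_right hAj (by positivity)
      _ = B * (‖z‖ / ρ) ^ k := by
          rw [hBdef, pow_add, pow_add, div_pow]
          field_simp
          ring
      _ ≤ B * (1/2) ^ k := by
          apply mul_le_mul_of_nonneg_left _ hB0
          apply pow_le_pow_left₀ (by positivity)
          rw [div_le_div_iff₀ (by positivity) (by norm_num)]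
          linarith
  have hgeo : Summable (fun k : ℕ => B * (1/2 : ℝ) ^ k) :=
    (summable_geometric_of_lt_one (by norm_num) (by norm_num)).mul_left B
  have hsummN : Summable (fun k : ℕ => ‖a (k + (n+1)) * z ^ (k + (n+1))‖) :=
    Summable.of_nonneg_of_le (fun _ => norm_nonneg _) hb hgeo
  have habs : ‖S - (z + a n * z ^ n)‖
      = ‖∑' k : ℕ, a (k + (n+1)) * z ^ (k + (n+1))‖ := by
    rw [hshift.tsum_eq]
  rw [habs]
  calc ‖∑' k : ℕ, a (k + (n+1)) * z ^ (k + (n+1))‖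
      ≤ ∑' k : ℕ, ‖a (k + (n+1)) * z ^ (k + (n+1))‖ := norm_tsum_le_tsum_norm hsummN
    _ ≤ ∑' k : ℕ, B * (1/2 : ℝ) ^ k := hsummN.tsum_le_tsum hb hgeo
    _ = B * (2 : ℝ) := by
        rw [tsum_mul_left, tsum_geometric_of_lt_one (by norm_num) (by norm_num)]
        norm_num
    _ = (2 * M / ρ ^ (n+1)) * (‖z‖) ^ (n+1) := by
        rw [hBdef]; ring

theorem index_truncation (a : ℕ → ℂ) (f : ℂ → ℂ) (R : ℝ) (hR : 0 < R)
    (ha0 : a 0 = 0) (ha1 : a 1 = 1)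
    (n : ℕ) (hn2 : 2 ≤ n) (hmin : ∀ m : ℕ, 2 ≤ m → m < n → a m = 0)
    (hre : (a n).re ≠ 0)
    (hsum : ∀ z : ℂ, ‖z‖ < R →
      HasSum (fun k : ℕ => a k * z ^ k) (f z + (starRingEnd ℂ) z))
    (g : ℂ → ℂ) (hg : ∀ z, g z = z + a n * z ^ n - (starRingEnd ℂ) z) :
    ∀ m : ℤ, HasIndex f 0 m ↔ HasIndex g 0 m := by
  -- Setup: ρ, bound M on coefficients
  obtain ⟨ρ, hρ, hρR', hρhalf⟩ : ∃ p : ℝ, 0 < p ∧ p < R ∧ p / 2 < R :=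
    ⟨R / 2, by positivity, by linarith, by linarith⟩
  have hρR : ‖((ρ : ℝ) : ℂ)‖ < R := by
    rw [Complex.norm_real, Real.norm_eq_abs, abs_of_pos hρ]; exact hρR'
  have hsumρ := (hsum ((ρ : ℝ) : ℂ) hρR).summable
  have htend : Filter.Tendsto (fun k : ℕ => ‖a k * ((ρ : ℝ) : ℂ) ^ k‖)
      Filter.atTop (nhds 0) := by
    have := hsumρ.tendsto_atTop_zero.norm
    simpa using this
  obtain ⟨M, hMub⟩ := htend.bddAbove_range
  have hM : ∀ k, ‖a k‖ * ρ ^ k ≤ M := by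
    intro k
    have h := hMub (Set.mem_range_self k)
    rwa [norm_mul, norm_pow,
      Complex.norm_real, Real.norm_eq_abs, abs_of_pos hρ] at h
  have hM0 : 0 ≤ M := le_trans (by positivity) (hM 0)
  -- continuity of f on the closed ball of radius ρ/2
  have hsub : ∀ z : ℂ, ‖z‖ ≤ ρ / 2 → ‖z‖ < R := by
    intro z h; exact lt_of_le_of_lt h hρhalf
  have hfc : ContinuousOn f (Metric.closedBall (0:ℂ) (ρ / 2)) := by
    have hmem : ∀ z : ℂ, z ∈ Metric.closedBall (0:ℂ) (ρ / 2) → ‖z‖ ≤ ρ / 2 := by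
      intro z hz
      rwa [Metric.mem_closedBall, dist_zero_right] at hz
    have heq : ∀ z ∈ Metric.closedBall (0:ℂ) (ρ / 2),
        (fun w => (∑' k : ℕ, a k * w ^ k) - (starRingEnd ℂ) w) z = f z := by
      intro z hz
      have := (hsum z (hsub z (hmem z hz))).tsum_eq
      simp only
      rw [this]; ring
    apply ContinuousOn.congr _ (fun z hz => (heq z hz).symm)
    apply ContinuousOn.sub
    · apply continuousOn_tsum (u := fun k : ℕ => M * (1/2) ^ k)
      · intro i
        exact (continuous_const.mul (continuous_pow i)).continuousOn
      · exact (summable_geometric_of_lt_one (by norm_num) (by norm_num)).mul_left M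
      · intro k z hz
        have hAk : ‖a k‖ ≤ M / ρ ^ k := by
          rw [le_div_iff₀ (by positivity)]; exact hM k
        calc ‖a k * z ^ k‖ = ‖a k‖ * (‖z‖) ^ k := by
              rw [norm_mul, norm_pow]
          _ ≤ (M / ρ ^ k) * (ρ / 2) ^ k := by
              apply mul_le_mul hAk (pow_le_pow_left₀ (norm_nonneg z) (hmem z hz) k)
                (by positivity) (by positivity)
          _ = M * (1/2) ^ k := by
              rw [div_pow, div_pow]
              field_simp
              rw [one_pow, mul_one]
    · exact continuous_conj.continuousOn
  have hgcont : Continuous g := by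
    have hgfun : g = fun z => z + a n * z ^ n - (starRingEnd ℂ) z := funext hg
    rw [hgfun]
    exact (continuous_id.add (continuous_const.mul (continuous_pow n))).sub continuous_conj
  -- constants
  obtain ⟨r1, hr10, hglb⟩ := g_lower (a n) hre n hn2
  set ε : ℝ := |(a n).re| with hεdef
  have hε : 0 < ε := abs_pos.mpr hre
  set C : ℝ := 2 * M / ρ ^ (n+1) with hCdef
  have hC0 : 0 ≤ C := by positivity
  set r0 : ℝ := min (ρ / 2) (min r1 (ε / (4 * (C + 1)))) with hr0def
  have hr00 : 0 < r0 := lt_min (by positivity) (lt_min hr10 (by positivity))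
  -- main estimates for every small circle
  have hkey : ∀ r : ℝ, 0 < r → r < r0 → ∀ t ∈ Icc (0:ℝ) (2 * Real.pi),
      ‖f ((0:ℂ) + r * Complex.exp (Complex.I * t))
          - g ((0:ℂ) + r * Complex.exp (Complex.I * t))‖
        < ‖g ((0:ℂ) + r * Complex.exp (Complex.I * t))‖
      ∧ ‖g ((0:ℂ) + r * Complex.exp (Complex.I * t))
          - f ((0:ℂ) + r * Complex.exp (Complex.I * t))‖
        < ‖f ((0:ℂ) + r * Complex.exp (Complex.I * t))‖ := by
    intro r hr hrlt t ht
    have hrρ : r ≤ ρ / 2 := le_of_lt (lt_of_lt_of_le hrlt (min_le_left _ _))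
    have hrr1 : r ≤ r1 :=
      le_of_lt (lt_of_lt_of_le hrlt (le_trans (min_le_right _ _) (min_le_left _ _)))
    have hrC : r < ε / (4 * (C + 1)) :=
      lt_of_lt_of_le hrlt (le_trans (min_le_right _ _) (min_le_right _ _))
    set w : ℂ := (0:ℂ) + r * Complex.exp (Complex.I * t) with hwdef
    have hwabs : ‖w‖ = r := circle_abs r t hr.le
    have hwle : ‖w‖ ≤ ρ / 2 := by rw [hwabs]; exact hrρ
    have hrn : (0:ℝ) < r ^ n := pow_pos hr n
    -- tail estimate
    have est1 : ‖f w - g w‖ ≤ C * r ^ (n+1) := by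
      have h := tail_bound a n hn2 ha0 ha1 hmin ρ M hρ hM
        (f w + (starRingEnd ℂ) w) w hwle (hsum w (hsub w hwle))
      rw [hwabs] at h
      have hfg : f w - g w = (f w + (starRingEnd ℂ) w) - (w + a n * w ^ n) := by
        rw [hg w]; ring
      rw [hfg]
      exact h
    -- lower bound for g
    have est2 : (ε / 2) * r ^ n ≤ ‖g w‖ := by
      have h := hglb r hr hrr1 w hwabs
      rw [← hg w] at h
      exact h
    -- Rouché inequality
    have est3 : C * r ^ (n+1) < (ε / 4) * r ^ n := by
      have h1 : (C + 1) * r < ε / 4 := by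
        rw [lt_div_iff₀ (by positivity : (0:ℝ) < 4 * (C + 1))] at hrC
        linarith
      have h2 : C * r < ε / 4 := by
        have : C * r < (C + 1) * r := by
          have := mul_lt_mul_of_pos_right (lt_add_one C) hr
          linarith
        linarith
      calc C * r ^ (n+1) = (C * r) * r ^ n := by rw [pow_succ]; ring
        _ < (ε / 4) * r ^ n := mul_lt_mul_of_pos_right h2 hrn
    have habsfg : ‖f w - g w‖ < (ε / 4) * r ^ n := lt_of_le_of_lt est1 est3
    have hq : (ε / 4) * r ^ n < (ε / 2) * r ^ n :=
      mul_lt_mul_of_pos_right (by linarith) hrn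
    constructor
    · exact lt_of_lt_of_le (lt_trans habsfg hq) est2
    · have hsym : ‖g w - f w‖ = ‖f w - g w‖ :=
        norm_sub_rev _ _
      have htri : ‖g w‖ ≤ ‖f w‖ + ‖g w - f w‖ := by
        have := norm_add_le (f w) (g w - f w)
        simpa using this
      rw [hsym]
      linarith
  -- continuity of the circle compositions
  have hcomp : ∀ r : ℝ, 0 < r → r < r0 →
      ContinuousOn (fun t : ℝ => f ((0:ℂ) + r * Complex.exp (Complex.I * t)))
        (Icc 0 (2 * Real.pi))
      ∧ ContinuousOn (fun t : ℝ => g ((0:ℂ) + r * Complex.exp (Complex.I * t)))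
        (Icc 0 (2 * Real.pi)) := by
    intro r hr hrlt
    have hrρ : r ≤ ρ / 2 := le_of_lt (lt_of_lt_of_le hrlt (min_le_left _ _))
    have hmaps : ∀ t : ℝ, ((0:ℂ) + r * Complex.exp (Complex.I * t))
        ∈ Metric.closedBall (0:ℂ) (ρ / 2) := by
      intro t
      rw [Metric.mem_closedBall, dist_zero_right, circle_abs r t hr.le]
      exact hrρ
    constructor
    · exact hfc.comp (circle_cont r).continuousOn (fun t _ => hmaps t)
    · exact (hgcont.comp (circle_cont r)).continuousOn
  -- conclusion
  intro m
  constructor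
  · rintro ⟨rf, hrf, hwind⟩
    refine ⟨min rf r0, lt_min hrf hr00, ?_⟩
    intro r hr hrlt
    have hrlt0 : r < r0 := lt_of_lt_of_le hrlt (min_le_right _ _)
    exact winding_congr g f r m (hcomp r hr hrlt0).2 (hcomp r hr hrlt0).1
      (fun t ht => (hkey r hr hrlt0 t ht).2)
      (hwind r hr (lt_of_lt_of_le hrlt (min_le_left _ _)))
  · rintro ⟨rg, hrg, hwind⟩
    refine ⟨min rg r0, lt_min hrg hr00, ?_⟩
    intro r hr hrlt
    have hrlt0 : r < r0 := lt_of_lt_of_le hrlt (min_le_right _ _)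
    exact winding_congr f g r m (hcomp r hr hrlt0).1 (hcomp r hr hrlt0).2
      (fun t ht => (hkey r hr hrlt0 t ht).1)
      (hwind r hr (lt_of_lt_of_le hrlt (min_le_left _ _)))
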